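/- The tensor product A ⊗ B, as a join-semilattice with zero, is a lattice if and only if it is closed under finite intersection (i.e., the intersection of any two compact bi-ideals, taken as sets, is again a compact bi-ideal). -/
import Mathlib


variable {A B : Type*} [SemilatticeSup A] [OrderBot A] [SemilatticeSup B] [OrderBot B]

/-- A bi-ideal of `A × B`: a downward closed subset containing
`∇ = (A × {0}) ∪ ({0} × B)` that is closed under lateral joins. -/
def IsBiIdeal (I : Set (A × B)) : Prop :=
  (∀ ⦃p q : A × B⦄, q ≤ p → p ∈ I → q ∈ I) ∧
  (∀ a : A, (a, (⊥ : B)) ∈ I) ∧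
  (∀ b : B, ((⊥ : A), b) ∈ I) ∧
  (∀ a₀ a₁ : A, ∀ b : B, (a₀, b) ∈ I → (a₁, b) ∈ I → (a₀ ⊔ a₁, b) ∈ I) ∧
  (∀ a : A, ∀ b₀ b₁ : B, (a, b₀) ∈ I → (a, b₁) ∈ I → (a, b₀ ⊔ b₁) ∈ I)

/-- `∇ = (A × {0}) ∪ ({0} × B)`, the least bi-ideal. -/
def nabla (A B : Type*) [SemilatticeSup A] [OrderBot A] [SemilatticeSup B] [OrderBot B] :
    Set (A × B) := {p | p.1 = ⊥ ∨ p.2 = ⊥}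

/-- The pure tensor `a ⊗ b`. -/
def pureTensor (a : A) (b : B) : Set (A × B) :=
  nabla A B ∪ {p | p.1 ≤ a ∧ p.2 ≤ b}

/-- The bi-ideal generated by a subset `X` of `A × B`. -/
def biGen (X : Set (A × B)) : Set (A × B) := ⋂₀ {K | IsBiIdeal K ∧ X ⊆ K}

/-- The join of two bi-ideals in the lattice of bi-ideals. -/
def biSup (I J : Set (A × B)) : Set (A × B) := biGen (I ∪ J)

/-- Elements of the tensor product `A ⊗ B`: the compact (finitely generated) bi-ideals. -/
def IsTensorElt (I : Set (A × B)) : Prop := ∃ S : Finset (A × B), I = biGen ↑S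

lemma isBiIdeal_inter {I J : Set (A × B)} (hI : IsBiIdeal I) (hJ : IsBiIdeal J) :
    IsBiIdeal (I ∩ J) := by
  obtain ⟨h1, h2, h3, h4, h5⟩ := hI
  obtain ⟨g1, g2, g3, g4, g5⟩ := hJ
  exact ⟨fun p q hq hp => ⟨h1 hq hp.1, g1 hq hp.2⟩,
    fun a => ⟨h2 a, g2 a⟩, fun b => ⟨h3 b, g3 b⟩,
    fun a₀ a₁ b ha hb => ⟨h4 a₀ a₁ b ha.1 hb.1, g4 a₀ a₁ b ha.2 hb.2⟩,
    fun a b₀ b₁ ha hb => ⟨h5 a b₀ b₁ ha.1 hb.1, g5 a b₀ b₁ ha.2 hb.2⟩⟩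

lemma isBiIdeal_biGen (X : Set (A × B)) : IsBiIdeal (biGen X) := by
  refine ⟨fun p q hq hp K hK => hK.1.1 hq (hp K hK),
    fun a K hK => hK.1.2.1 a, fun b K hK => hK.1.2.2.1 b,
    fun a₀ a₁ b ha hb K hK => hK.1.2.2.2.1 a₀ a₁ b (ha K hK) (hb K hK),
    fun a b₀ b₁ ha hb K hK => hK.1.2.2.2.2 a b₀ b₁ (ha K hK) (hb K hK)⟩

lemma subset_biGen (X : Set (A × B)) : X ⊆ biGen X :=
  fun p hp K hK => hK.2 hp

lemma biGen_subset {X K : Set (A × B)} (hK : IsBiIdeal K) (hXK : X ⊆ K) : biGen X ⊆ K :=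
  fun p hp => hp K ⟨hK, hXK⟩

lemma isBiIdeal_of_tensorElt {I : Set (A × B)} (h : IsTensorElt I) : IsBiIdeal I := by
  obtain ⟨S, rfl⟩ := h; exact isBiIdeal_biGen _

/-- `A ⊗ B` is a lattice iff it is closed under finite intersection. -/
theorem tensorProduct_lattice_iff_inter_closed (A B : Type*) [SemilatticeSup A]
    [OrderBot A] [SemilatticeSup B] [OrderBot B] :
    (∀ I J : Set (A × B), IsTensorElt I → IsTensorElt J →
        ∃ K : Set (A × B), IsTensorElt K ∧ K ⊆ I ∧ K ⊆ J ∧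
          ∀ L : Set (A × B), IsTensorElt L → L ⊆ I → L ⊆ J → L ⊆ K) ↔
      (∀ I J : Set (A × B), IsTensorElt I → IsTensorElt J → IsTensorElt (I ∩ J)) := by
  constructor
  · intro h I J hI hJ
    obtain ⟨K, hK, hKI, hKJ, hmax⟩ := h I J hI hJ
    have hIJ : IsBiIdeal (I ∩ J) :=
      isBiIdeal_inter (isBiIdeal_of_tensorElt hI) (isBiIdeal_of_tensorElt hJ)
    have hKeq : K = I ∩ J := by
      apply Set.Subset.antisymm (Set.subset_inter hKI hKJ)
      intro p hp
      have hL : IsTensorElt (biGen {p}) := ⟨{p}, by simp⟩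
      have hsub : biGen {p} ⊆ I ∩ J := biGen_subset hIJ (by simpa using hp)
      exact hmax (biGen {p}) hL (hsub.trans Set.inter_subset_left)
        (hsub.trans Set.inter_subset_right) (subset_biGen _ (by simp))
    rwa [← hKeq]
  · intro h I J hI hJ
    exact ⟨I ∩ J, h I J hI hJ, Set.inter_subset_left, Set.inter_subset_right,
      fun L _ hLI hLJ => Set.subset_inter hLI hLJ⟩
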